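/- Let G be a groupoid, R an associative ring, and α = (D_g, α_g)_{g∈G} a partial action of G on R such that D_g is s-unital for every g ∈ G and R = ⊕_{e∈G₀} D_e. Then R is G-prime if, and only if, R ⋊_α G is graded prime. -/

import Mathlib

open scoped Classical

/-- A (discrete) groupoid, presented as its set of morphisms `G`, with source map `s`,
range map `r`, inversion `inv` and a partially defined multiplication `mul`.
The units (identity morphisms, i.e. the objects) are the elements `e` with `r e = e`. -/
structure DGroupoid (G : Type*) where
  s : G → G
  r : G → G
  inv : G → G
  mul : (g h : G) → s g = r h → G
  s_inv : ∀ g, s (inv g) = r g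
  r_inv : ∀ g, r (inv g) = s g
  inv_inv : ∀ g, inv (inv g) = g
  r_mul : ∀ g h (p : s g = r h), r (mul g h p) = r g
  s_mul : ∀ g h (p : s g = r h), s (mul g h p) = s h
  r_idem : ∀ g, r (r g) = r g
  s_of_r : ∀ g, s (r g) = r g
  r_of_s : ∀ g, r (s g) = s g
  s_idem : ∀ g, s (s g) = s g
  assoc : ∀ g h k (p : s g = r h) (q : s h = r k) (pq : s (mul g h p) = r k)
      (qp : s g = r (mul h k q)), mul (mul g h p) k pq = mul g (mul h k q) qp
  id_mul : ∀ g (p : s (r g) = r g), mul (r g) g p = g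
  mul_id : ∀ g (p : s g = r (s g)), mul g (s g) p = g
  mul_inv : ∀ g (p : s g = r (inv g)), mul g (inv g) p = r g
  inv_mul : ∀ g (p : s (inv g) = r g), mul (inv g) g p = s g

namespace DGroupoid

/-- `e` is a unit (an object, identified with its identity morphism) of the groupoid. -/
def unit {G : Type*} (𝔾 : DGroupoid G) (e : G) : Prop := 𝔾.r e = e

end DGroupoid

section RingDefs

variable {R : Type*} [NonUnitalRing R]

/-- A subset of a (possibly non-unital) ring is a two-sided ideal. -/
def IsRingIdeal (J : Set R) : Prop :=
  (0 : R) ∈ J ∧ (∀ x ∈ J, ∀ y ∈ J, x + y ∈ J) ∧ (∀ x ∈ J, -x ∈ J) ∧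
    ∀ x ∈ J, ∀ y : R, x * y ∈ J ∧ y * x ∈ J

/-- A subset of a ring, viewed as a ring, is s-unital: every `x` in it lies in
`xT ∩ Tx`. -/
def IsSUnitalSet (J : Set R) : Prop :=
  ∀ x ∈ J, (∃ u ∈ J, x * u = x) ∧ (∃ v ∈ J, v * x = x)

end RingDefs

/-- A partial action `α = (D_g, α_g)_{g ∈ G}` of a groupoid `𝔾` on a
(possibly non-unital, associative) ring `R`:  each `D_{r g}` is a two-sided ideal of `R`,
each `D_g` is a two-sided ideal of `D_{r g}`, and `α_g = act g` restricts to a ring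
isomorphism `D_{g⁻¹} → D_g` (the function `act g` is arbitrary outside `D_{g⁻¹}`),
satisfying the axioms of a partial action. -/
structure PartialAction {G : Type*} (𝔾 : DGroupoid G) (R : Type*) [NonUnitalRing R] where
  D : G → Set R
  zero_mem : ∀ g, (0 : R) ∈ D g
  add_mem : ∀ g, ∀ x ∈ D g, ∀ y ∈ D g, x + y ∈ D g
  neg_mem : ∀ g, ∀ x ∈ D g, -x ∈ D g
  subset_r : ∀ g, D g ⊆ D (𝔾.r g)
  idealR : ∀ g, IsRingIdeal (D (𝔾.r g))
  idealInR : ∀ g, ∀ x ∈ D g, ∀ y ∈ D (𝔾.r g), x * y ∈ D g ∧ y * x ∈ D g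
  act : G → R → R
  act_mem : ∀ g, ∀ x ∈ D (𝔾.inv g), act g x ∈ D g
  act_add : ∀ g, ∀ x ∈ D (𝔾.inv g), ∀ y ∈ D (𝔾.inv g), act g (x + y) = act g x + act g y
  act_mul : ∀ g, ∀ x ∈ D (𝔾.inv g), ∀ y ∈ D (𝔾.inv g), act g (x * y) = act g x * act g y
  act_inv : ∀ g, ∀ x ∈ D (𝔾.inv g), act (𝔾.inv g) (act g x) = x
  act_unit : ∀ e, 𝔾.unit e → ∀ x ∈ D e, act e x = x
  act_comp_mem : ∀ g h (p : 𝔾.s g = 𝔾.r h), ∀ x, x ∈ D (𝔾.inv g) → x ∈ D h →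
      act (𝔾.inv h) x ∈ D (𝔾.inv (𝔾.mul g h p))
  act_comp : ∀ g h (p : 𝔾.s g = 𝔾.r h), ∀ x ∈ D (𝔾.inv h), act h x ∈ D (𝔾.inv g) →
      act g (act h x) = act (𝔾.mul g h p) x

namespace PartialAction

variable {G : Type*} {R : Type*} [NonUnitalRing R] {𝔾 : DGroupoid G} (P : PartialAction 𝔾 R)

/-- `R = ⊕_{e ∈ G₀} D_e`: every element of `R` decomposes as a finite sum of elements
of the `D_e` (`e` a unit), and the decomposition is unique (a finite sum of elements of
the distinct `D_e`'s which vanishes has all terms zero). -/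
def directSum : Prop :=
  (∀ x : R, ∃ f : G →₀ R, (∀ g ∈ f.support, 𝔾.unit g) ∧ (∀ g, f g ∈ P.D g) ∧
      (f.sum fun _ v => v) = x) ∧
    ∀ f : G →₀ R, (∀ g ∈ f.support, 𝔾.unit g) → (∀ g, f g ∈ P.D g) →
      (f.sum fun _ v => v) = 0 → f = 0

/-- The carrier of the partial skew groupoid ring `R ⋊_α G`: finitely supported
functions `a : G →₀ R` (thought of as `Σ_g a_g δ_g`) with `a g ∈ D g`. -/
def carrier : Set (G →₀ R) := {a | ∀ g, a g ∈ P.D g}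

/-- The multiplication of the partial skew groupoid ring:
`(a_g δ_g)(b_h δ_h) = α_g(α_{g⁻¹}(a_g) b_h) δ_{gh}` when `(g,h)` is composable,
and `0` otherwise. -/
noncomputable def skewMul (a b : G →₀ R) : G →₀ R :=
  a.support.sum fun g => b.support.sum fun h =>
    if p : 𝔾.s g = 𝔾.r h then
      Finsupp.single (𝔾.mul g h p) (P.act g (P.act (𝔾.inv g) (a g) * b h))
    else 0

/-- The subset `⊕_{e ∈ G₀} D_e δ_e` of `R ⋊_α G`: elements supported on units. -/
def diag : Set (G →₀ R) := {a | (∀ g, a g ∈ P.D g) ∧ ∀ g ∈ a.support, 𝔾.unit g}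

/-- `I` is a two-sided ideal of the partial skew groupoid ring `R ⋊_α G`. -/
def IsSkewIdeal (I : Set (G →₀ R)) : Prop :=
  I ⊆ P.carrier ∧ (0 : G →₀ R) ∈ I ∧ (∀ x ∈ I, ∀ y ∈ I, x + y ∈ I) ∧ (∀ x ∈ I, -x ∈ I) ∧
    ∀ x ∈ I, ∀ y ∈ P.carrier, P.skewMul x y ∈ I ∧ P.skewMul y x ∈ I

/-- The projection `P₀ : R ⋊_α G → R`, `Σ_g a_g δ_g ↦ Σ_{e ∈ G₀} a_e`. -/
noncomputable def P0 (_P : PartialAction 𝔾 R) (a : G →₀ R) : R :=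
  a.sum fun g v => if 𝔾.unit g then v else 0

/-- An ideal `I` of `R ⋊_α G` is `G`-graded if it is generated by its homogeneous
components, i.e. `I = ⊕_g (I ∩ D_g δ_g)`. -/
def IsGradedIdeal (I : Set (G →₀ R)) : Prop :=
  P.IsSkewIdeal I ∧ ∀ a ∈ I, ∀ g : G, Finsupp.single g (a g) ∈ I

/-- `J` is a `G`-invariant (two-sided) ideal of `R`: `α_g(D_{g⁻¹} ∩ J) ⊆ J`. -/
def IsInvIdeal (J : Set R) : Prop :=
  IsRingIdeal J ∧ ∀ g, ∀ x ∈ P.D (𝔾.inv g) ∩ J, P.act g x ∈ J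

/-- The subset `J ⋊_{α^J} G = ⊕_g (J ∩ D_g) δ_g` of `R ⋊_α G` attached to a
`G`-invariant ideal `J` of `R`. -/
def skewOf (J : Set R) : Set (G →₀ R) := {a | ∀ g, a g ∈ P.D g ∩ J}

/-- `⊕_{e ∈ G₀} D_e δ_e` is a maximal commutative subring of `R ⋊_α G`: it is
commutative and coincides with its centralizer. -/
def IsMaxCommDiag : Prop :=
  (∀ a ∈ P.diag, ∀ b ∈ P.diag, P.skewMul a b = P.skewMul b a) ∧
    ∀ b ∈ P.carrier, (∀ a ∈ P.diag, P.skewMul a b = P.skewMul b a) → b ∈ P.diag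

/-- The partial action has the intersection property: every nonzero ideal of
`R ⋊_α G` intersects `⊕_{e ∈ G₀} D_e δ_e` nontrivially. -/
def HasIntersectionProperty : Prop :=
  ∀ I : Set (G →₀ R), P.IsSkewIdeal I → I ≠ {0} → I ∩ P.diag ≠ {0}

/-- `R` is `G`-simple: the only `G`-invariant ideals of `R` are `{0}` and `R`. -/
def GSimple : Prop := ∀ J : Set R, P.IsInvIdeal J → J = {0} ∨ J = Set.univ

/-- `R` is `G`-prime: if `I, J` are `G`-invariant ideals with `IJ = {0}`, then
`I = {0}` or `J = {0}`. -/
def GPrime : Prop :=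
  ∀ I J : Set R, P.IsInvIdeal I → P.IsInvIdeal J →
    (∀ x ∈ I, ∀ y ∈ J, x * y = 0) → I = {0} ∨ J = {0}

/-- `R ⋊_α G` is graded simple. -/
def GradedSimple : Prop :=
  ∀ I : Set (G →₀ R), P.IsGradedIdeal I → I = {0} ∨ I = P.carrier

/-- `R ⋊_α G` is graded prime. -/
def GradedPrime : Prop :=
  ∀ I J : Set (G →₀ R), P.IsGradedIdeal I → P.IsGradedIdeal J →
    (∀ x ∈ I, ∀ y ∈ J, P.skewMul x y = 0) → I = {0} ∨ J = {0}

/-- `R ⋊_α G` is a prime ring. -/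
def SkewPrime : Prop :=
  ∀ I J : Set (G →₀ R), P.IsSkewIdeal I → P.IsSkewIdeal J →
    (∀ x ∈ I, ∀ y ∈ J, P.skewMul x y = 0) → I = {0} ∨ J = {0}

/-- `R ⋊_α G` is a simple ring. -/
def SkewSimple : Prop :=
  ∀ I : Set (G →₀ R), P.IsSkewIdeal I → I = {0} ∨ I = P.carrier

end PartialAction

section AuxiliaryLemmas

namespace DGroupoid

variable {G : Type*} (𝔾 : DGroupoid G)

theorem mul_congr {g g' h h' : G} (hg : g = g') (hh : h = h')
    (p : 𝔾.s g = 𝔾.r h) (p' : 𝔾.s g' = 𝔾.r h') : 𝔾.mul g h p = 𝔾.mul g' h' p' := by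
  subst hg; subst hh; rfl

theorem unit_r (g : G) : 𝔾.unit (𝔾.r g) := 𝔾.r_idem g

theorem unit_s (g : G) : 𝔾.unit (𝔾.s g) := 𝔾.r_of_s g

theorem unit_s_eq {e : G} (he : 𝔾.unit e) : 𝔾.s e = e := by
  conv_lhs => rw [← he]
  rw [𝔾.s_of_r, he]

theorem unit_inv_eq {e : G} (he : 𝔾.unit e) : 𝔾.inv e = e := by
  have p1 : 𝔾.s (𝔾.r (𝔾.inv e)) = 𝔾.r (𝔾.inv e) := 𝔾.s_of_r _
  have h1 := 𝔾.id_mul (𝔾.inv e) p1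
  have p2 : 𝔾.s e = 𝔾.r (𝔾.inv e) := (𝔾.r_inv e).symm
  have h2 := 𝔾.mul_inv e p2
  have hr : 𝔾.r (𝔾.inv e) = e := by rw [𝔾.r_inv, 𝔾.unit_s_eq he]
  have h3 := 𝔾.mul_congr (h := 𝔾.inv e) hr rfl p1 p2
  rw [h3, h2, he] at h1
  exact h1.symm

theorem unit_mul_self {e : G} (he : 𝔾.unit e) (p : 𝔾.s e = 𝔾.r e) : 𝔾.mul e e p = e := by
  have p1 : 𝔾.s (𝔾.r e) = 𝔾.r e := 𝔾.s_of_r e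
  have h1 := 𝔾.id_mul e p1
  exact (𝔾.mul_congr he.symm rfl p p1).trans h1

end DGroupoid

namespace PartialAction

open Finsupp

variable {G R : Type*} [NonUnitalRing R] {𝔾 : DGroupoid G} (P : PartialAction 𝔾 R)

theorem act_zero (g : G) : P.act g 0 = 0 := by
  have h := P.act_add g 0 (P.zero_mem _) 0 (P.zero_mem _)
  rw [add_zero] at h
  exact left_eq_add.mp h

theorem act_act_inv {g : G} {y : R} (hy : y ∈ P.D g) :
    P.act g (P.act (𝔾.inv g) y) = y := by
  have := P.act_inv (𝔾.inv g) y (by rw [𝔾.inv_inv]; exact hy)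
  rwa [𝔾.inv_inv] at this

/-- For a unit `e`, `D e` is a two-sided ideal of `R`. -/
theorem idealD_unit {e : G} (he : 𝔾.unit e) : IsRingIdeal (P.D e) := by
  have := P.idealR e
  rwa [he] at this

/-- Distinct units have trivially intersecting domains. -/
theorem disjointD (hds : P.directSum) {e e' : G} (he : 𝔾.unit e) (he' : 𝔾.unit e')
    (hne : e ≠ e') {x : R} (hx : x ∈ P.D e) (hx' : x ∈ P.D e') : x = 0 := by
  classical
  set f : G →₀ R := Finsupp.single e x + Finsupp.single e' (-x) with hf
  have hsupp : ∀ g ∈ f.support, 𝔾.unit g := by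
    intro g hg
    have := Finsupp.support_add hg
    rcases Finset.mem_union.mp this with h | h
    · have := Finsupp.support_single_subset h
      rw [Finset.mem_singleton.mp this]; exact he
    · have := Finsupp.support_single_subset h
      rw [Finset.mem_singleton.mp this]; exact he'
  have hval : ∀ g, f g ∈ P.D g := by
    intro g
    rw [hf, Finsupp.add_apply, Finsupp.single_apply, Finsupp.single_apply]
    split_ifs with h1 h2 h2
    · exact absurd (h1.trans h2.symm) hne
    · rw [add_zero]; exact h1 ▸ hx
    · rw [zero_add]; exact h2 ▸ P.neg_mem _ _ hx'
    · rw [add_zero]; exact P.zero_mem g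
  have hsum : (f.sum fun _ v => v) = 0 := by
    rw [hf, Finsupp.sum_add_index' (fun _ => rfl) (fun _ _ _ => rfl),
      Finsupp.sum_single_index rfl, Finsupp.sum_single_index rfl, add_neg_cancel]
  have hzero := hds.2 f hsupp hval hsum
  have : f e = 0 := by rw [hzero]; rfl
  rw [hf, Finsupp.add_apply, Finsupp.single_eq_same, Finsupp.single_eq_of_ne' (Ne.symm hne),
    add_zero] at this
  exact this

theorem single_mem_carrier {g : G} {x : R} (hx : x ∈ P.D g) :
    (Finsupp.single g x : G →₀ R) ∈ P.carrier := by
  intro k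
  rw [Finsupp.single_apply]
  split_ifs with h
  · exact h ▸ hx
  · exact P.zero_mem k

/-- Value of the skew product on two "monomials". -/
theorem skewMul_single (g h : G) (x y : R) :
    P.skewMul (Finsupp.single g x) (Finsupp.single h y) =
      if p : 𝔾.s g = 𝔾.r h then
        Finsupp.single (𝔾.mul g h p) (P.act g (P.act (𝔾.inv g) x * y)) else 0 := by
  classical
  by_cases hx : x = 0
  · subst hx
    rw [skewMul, Finsupp.single_zero, Finsupp.support_zero, Finset.sum_empty]
    split_ifs with p
    · rw [P.act_zero, zero_mul, P.act_zero, Finsupp.single_zero]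
    · rfl
  by_cases hy : y = 0
  · subst hy
    rw [skewMul, Finsupp.single_zero, Finsupp.support_zero]
    rw [show ((Finsupp.single g x).support.sum fun g' => (∅ : Finset G).sum fun h' =>
        if p : 𝔾.s g' = 𝔾.r h' then
          Finsupp.single (𝔾.mul g' h' p)
            (P.act g' (P.act (𝔾.inv g') ((Finsupp.single g x) g') * (0 : G →₀ R) h'))
        else 0) = 0 from Finset.sum_eq_zero fun _ _ => Finset.sum_empty]
    split_ifs with p
    · rw [mul_zero, P.act_zero, Finsupp.single_zero]
    · rfl
  · rw [skewMul, Finsupp.support_single_ne_zero _ hx, Finsupp.support_single_ne_zero _ hy,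
      Finset.sum_singleton, Finset.sum_singleton, Finsupp.single_eq_same,
      Finsupp.single_eq_same]

/-- Values of a skew product all lie in a pointwise additively-closed family `S`
as soon as all "monomial" coefficients do. -/
theorem skewMul_apply_mem (S : G → Set R) (h0 : ∀ k, 0 ∈ S k)
    (hadd : ∀ k, ∀ x ∈ S k, ∀ y ∈ S k, x + y ∈ S k) (a b : G →₀ R)
    (hterm : ∀ g ∈ a.support, ∀ h ∈ b.support, ∀ p : 𝔾.s g = 𝔾.r h,
      P.act g (P.act (𝔾.inv g) (a g) * b h) ∈ S (𝔾.mul g h p)) :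
    ∀ k, (P.skewMul a b) k ∈ S k := by
  classical
  intro k
  rw [skewMul, Finsupp.finset_sum_apply]
  refine Finset.sum_induction _ (· ∈ S k) (fun x y hx hy => hadd k x hx y hy) (h0 k) ?_
  intro g hg
  rw [Finsupp.finset_sum_apply]
  refine Finset.sum_induction _ (· ∈ S k) (fun x y hx hy => hadd k x hx y hy) (h0 k) ?_
  intro h hh
  split_ifs with p
  · rw [Finsupp.single_apply]
    split_ifs with hk
    · exact hk ▸ hterm g hg h hh p
    · exact h0 k
  · exact h0 k

/-- `α_g(D_{g⁻¹} ∩ D_h) ⊆ D_{gh}`. -/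
theorem act_mem_mul {g h : G} (p : 𝔾.s g = 𝔾.r h) {y : R}
    (hy1 : y ∈ P.D (𝔾.inv g)) (hy2 : y ∈ P.D h) :
    P.act g y ∈ P.D (𝔾.mul g h p) := by
  have hx : P.act (𝔾.inv h) y ∈ P.D (𝔾.inv (𝔾.mul g h p)) := P.act_comp_mem g h p y hy1 hy2
  have hxh : P.act (𝔾.inv h) y ∈ P.D (𝔾.inv h) :=
    P.act_mem (𝔾.inv h) y (by rw [𝔾.inv_inv]; exact hy2)
  have h2 : P.act h (P.act (𝔾.inv h) y) = y := P.act_act_inv hy2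
  have h3 := P.act_comp g h p (P.act (𝔾.inv h) y) hxh (by rw [h2]; exact hy1)
  rw [h2] at h3
  rw [h3]
  exact P.act_mem _ _ hx

/-- `D_{g⁻¹} · D_h ⊆ D_{g⁻¹} ∩ D_h` for composable `(g, h)`. -/
theorem mul_mem_inter {g h : G} (p : 𝔾.s g = 𝔾.r h) {x y : R}
    (hx : x ∈ P.D (𝔾.inv g)) (hy : y ∈ P.D h) :
    x * y ∈ P.D (𝔾.inv g) ∧ x * y ∈ P.D h := by
  have hrr : 𝔾.r (𝔾.inv g) = 𝔾.r h := by rw [𝔾.r_inv, p]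
  constructor
  · refine (P.idealInR (𝔾.inv g) x hx y ?_).1
    rw [hrr]; exact P.subset_r h hy
  · refine (P.idealInR h y hy x ?_).2
    rw [← hrr]; exact P.subset_r (𝔾.inv g) hx

/-- skew product of monomials at the same unit. -/
theorem skewMul_single_unit {e : G} (he : 𝔾.unit e) {x y : R}
    (hx : x ∈ P.D e) (hy : y ∈ P.D e) :
    P.skewMul (Finsupp.single e x) (Finsupp.single e y) = Finsupp.single e (x * y) := by
  have p : 𝔾.s e = 𝔾.r e := by rw [𝔾.unit_s_eq he, he]
  rw [P.skewMul_single, dif_pos p, 𝔾.unit_mul_self he p]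
  congr 1
  rw [𝔾.unit_inv_eq he, P.act_unit e he x hx, P.act_unit e he _ ((P.idealD_unit he).2.2.2 x hx y).1]

/-- `J ⋊ G` is a graded ideal when `J` is a `G`-invariant ideal. -/
theorem isGradedIdeal_skewOf {J : Set R} (hJ : P.IsInvIdeal J) :
    P.IsGradedIdeal (P.skewOf J) := by
  have h0 : ∀ k, (0 : R) ∈ P.D k ∩ J := fun k => ⟨P.zero_mem k, hJ.1.1⟩
  have hadd : ∀ k, ∀ x ∈ P.D k ∩ J, ∀ y ∈ P.D k ∩ J, x + y ∈ P.D k ∩ J := fun k x hx y hy =>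
    ⟨P.add_mem k x hx.1 y hy.1, hJ.1.2.1 x hx.2 y hy.2⟩
  refine ⟨⟨fun a ha g => (ha g).1, fun g => h0 g, ?_, ?_, ?_⟩, ?_⟩
  · intro x hx y hy g
    rw [Finsupp.add_apply]
    exact hadd g _ (hx g) _ (hy g)
  · intro x hx g
    rw [Finsupp.neg_apply]
    exact ⟨P.neg_mem g _ (hx g).1, hJ.1.2.2.1 _ (hx g).2⟩
  · intro x hx y hy
    constructor
    · refine fun k => P.skewMul_apply_mem _ h0 hadd x y ?_ k
      intro g _ h _ p
      have h1 : P.act (𝔾.inv g) (x g) ∈ P.D (𝔾.inv g) :=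
        P.act_mem (𝔾.inv g) (x g) (by rw [𝔾.inv_inv]; exact (hx g).1)
      have h1J : P.act (𝔾.inv g) (x g) ∈ J :=
        hJ.2 (𝔾.inv g) (x g) ⟨by rw [𝔾.inv_inv]; exact (hx g).1, (hx g).2⟩
      have h2 := P.mul_mem_inter p h1 (hy h)
      have h2J : P.act (𝔾.inv g) (x g) * y h ∈ J := (hJ.1.2.2.2 _ h1J (y h)).1
      exact ⟨P.act_mem_mul p h2.1 h2.2, hJ.2 g _ ⟨h2.1, h2J⟩⟩
    · refine fun k => P.skewMul_apply_mem _ h0 hadd y x ?_ k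
      intro g _ h _ p
      have h1 : P.act (𝔾.inv g) (y g) ∈ P.D (𝔾.inv g) :=
        P.act_mem (𝔾.inv g) (y g) (by rw [𝔾.inv_inv]; exact hy g)
      have h2 := P.mul_mem_inter p h1 (hx h).1
      have h2J : P.act (𝔾.inv g) (y g) * x h ∈ J := (hJ.1.2.2.2 _ (hx h).2 _).2
      exact ⟨P.act_mem_mul p h2.1 h2.2, hJ.2 g _ ⟨h2.1, h2J⟩⟩
  · intro a ha g k
    rw [Finsupp.single_apply]
    split_ifs with hk
    · exact hk ▸ ha g
    · exact h0 k

/-- If `J ⋊ G = {0}` for an ideal `J` of `R`, then `J = {0}`. -/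
theorem eq_zero_of_skewOf_eq_zero (hsu : ∀ g, IsSUnitalSet (P.D g)) (hds : P.directSum)
    {J : Set R} (hJ : IsRingIdeal J) (h : P.skewOf J = {0}) : J = {0} := by
  ext x
  simp only [Set.mem_singleton_iff]
  constructor
  · intro hx
    obtain ⟨f, hfu, hfD, hfs⟩ := hds.1 x
    have hkey : ∀ e ∈ f.support, f e = (0 : R) := by
      intro e hes
      obtain ⟨⟨u, hu, hxu⟩, -⟩ := hsu e (f e) (hfD e)
      have hxu2 : x * u = f e := by
        rw [← hfs, Finsupp.sum, Finset.sum_mul]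
        rw [Finset.sum_eq_single_of_mem e hes]
        · exact hxu
        · intro g hg hge
          exact P.disjointD hds (hfu g hg) (hfu e hes) hge
            ((P.idealD_unit (hfu g hg)).2.2.2 (f g) (hfD g) u).1
            ((P.idealD_unit (hfu e hes)).2.2.2 u hu (f g)).2
      have hfeJ : f e ∈ J := hxu2 ▸ (hJ.2.2.2 x hx u).1
      have hmem : (Finsupp.single e (f e) : G →₀ R) ∈ P.skewOf J := by
        intro k
        rw [Finsupp.single_apply]
        split_ifs with hk
        · exact hk ▸ ⟨hfD e, hfeJ⟩
        · exact ⟨P.zero_mem k, hJ.1⟩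
      rw [h, Set.mem_singleton_iff] at hmem
      exact (Finsupp.single_eq_zero).mp hmem
    have : f.sum (fun _ v => v) = 0 := Finset.sum_eq_zero hkey
    rw [hfs] at this
    exact this
  · rintro rfl
    exact hJ.1

/-- The product of `I ⋊ G` and `J ⋊ G` vanishes when `IJ = 0`. -/
theorem skewMul_skewOf_zero {I J : Set R} (hI : P.IsInvIdeal I)
    (hIJ : ∀ x ∈ I, ∀ y ∈ J, x * y = 0) {a b : G →₀ R}
    (ha : a ∈ P.skewOf I) (hb : b ∈ P.skewOf J) : P.skewMul a b = 0 := by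
  rw [skewMul]
  refine Finset.sum_eq_zero fun g _ => Finset.sum_eq_zero fun h _ => ?_
  split_ifs with p
  · have h1 : P.act (𝔾.inv g) (a g) ∈ I :=
      hI.2 (𝔾.inv g) (a g) ⟨by rw [𝔾.inv_inv]; exact (ha g).1, (ha g).2⟩
    rw [hIJ _ h1 _ (hb h).2, P.act_zero, Finsupp.single_zero]
  · rfl

/-- The `G₀`-homogeneous part of a graded ideal `I` of `R ⋊ G`, as a subset of `R`. -/
def gradedBase (I : Set (G →₀ R)) : Set R :=
  {x | ∃ f : G →₀ R, (∀ g ∈ f.support, 𝔾.unit g) ∧ (∀ g, f g ∈ P.D g) ∧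
    (∀ g, (Finsupp.single g (f g) : G →₀ R) ∈ I) ∧ f.sum (fun _ v => v) = x}

theorem mul_decomp (hds : P.directSum) (f f' : G →₀ R)
    (hfu : ∀ g ∈ f.support, 𝔾.unit g) (hf'u : ∀ g ∈ f'.support, 𝔾.unit g)
    (hfD : ∀ g, f g ∈ P.D g) (hf'D : ∀ g, f' g ∈ P.D g) :
    (f.sum fun _ v => v) * (f'.sum fun _ v => v) = ∑ g ∈ f.support, f g * f' g := by
  rw [Finsupp.sum, Finsupp.sum, Finset.sum_mul]
  refine Finset.sum_congr rfl fun g hg => ?_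
  rw [Finset.mul_sum]
  refine Finset.sum_eq_single g ?_ ?_
  · intro b hb hbg
    exact P.disjointD hds (hfu g hg) (hf'u b hb) (fun h => hbg h.symm)
      ((P.idealD_unit (hfu g hg)).2.2.2 (f g) (hfD g) (f' b)).1
      ((P.idealD_unit (hf'u b hb)).2.2.2 (f' b) (hf'D b) (f g)).2
  · intro hgs
    rw [Finsupp.notMem_support_iff.mp hgs, mul_zero]

theorem zip_sum (f f' : G →₀ R) :
    (Finsupp.zipWith (· * ·) (zero_mul 0) f f').sum (fun _ v => v) =
      ∑ g ∈ f.support, f g * f' g := by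
  classical
  rw [Finsupp.sum]
  have hsub : (Finsupp.zipWith (· * ·) (zero_mul 0) f f').support ⊆ f.support := by
    intro g hg
    rw [Finsupp.mem_support_iff, Finsupp.zipWith_apply] at hg
    rw [Finsupp.mem_support_iff]
    intro h0
    exact hg (by rw [h0, zero_mul])
  rw [Finset.sum_subset hsub (fun g _ hg => Finsupp.notMem_support_iff.mp hg)]
  exact Finset.sum_congr rfl fun g _ => Finsupp.zipWith_apply

/-- `gradedBase I` is closed under multiplication on either side by `R`. -/
theorem gradedBase_mul (hds : P.directSum) {I : Set (G →₀ R)} (hI : P.IsSkewIdeal I)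
    {x : R} (hx : x ∈ P.gradedBase I) (y : R) :
    x * y ∈ P.gradedBase I ∧ y * x ∈ P.gradedBase I := by
  classical
  obtain ⟨f, hfu, hfD, hfI, hfs⟩ := hx
  obtain ⟨f', hf'u, hf'D, hf's⟩ := hds.1 y
  constructor
  · refine ⟨Finsupp.zipWith (· * ·) (zero_mul 0) f f', ?_, ?_, ?_, ?_⟩
    · intro g hg
      rw [Finsupp.mem_support_iff, Finsupp.zipWith_apply] at hg
      refine hfu g (Finsupp.mem_support_iff.mpr fun h0 => hg ?_)
      rw [h0, zero_mul]
    · intro g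
      rw [Finsupp.zipWith_apply]
      exact (P.idealInR g (f g) (hfD g) (f' g) (P.subset_r g (hf'D g))).1
    · intro g
      rw [Finsupp.zipWith_apply]
      by_cases h0 : f g * f' g = 0
      · rw [h0, Finsupp.single_zero]; exact hI.2.1
      · have hg : g ∈ f.support := Finsupp.mem_support_iff.mpr fun h => h0 (by rw [h, zero_mul])
        rw [← P.skewMul_single_unit (hfu g hg) (hfD g) (hf'D g)]
        exact (hI.2.2.2.2 _ (hfI g) _ (P.single_mem_carrier (hf'D g))).1
    · rw [zip_sum, ← P.mul_decomp hds f f' hfu hf'u hfD hf'D, hfs, hf's]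
  · refine ⟨Finsupp.zipWith (· * ·) (zero_mul 0) f' f, ?_, ?_, ?_, ?_⟩
    · intro g hg
      rw [Finsupp.mem_support_iff, Finsupp.zipWith_apply] at hg
      refine hf'u g (Finsupp.mem_support_iff.mpr fun h0 => hg ?_)
      rw [h0, zero_mul]
    · intro g
      rw [Finsupp.zipWith_apply]
      exact (P.idealInR g (f' g) (hf'D g) (f g) (P.subset_r g (hfD g))).1
    · intro g
      rw [Finsupp.zipWith_apply]
      by_cases h0 : f' g * f g = 0
      · rw [h0, Finsupp.single_zero]; exact hI.2.1
      · have hg : g ∈ f'.support := Finsupp.mem_support_iff.mpr fun h => h0 (by rw [h, zero_mul])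
        rw [← P.skewMul_single_unit (hf'u g hg) (hf'D g) (hfD g)]
        exact (hI.2.2.2.2 _ (hfI g) _ (P.single_mem_carrier (hf'D g))).2
    · rw [zip_sum, ← P.mul_decomp hds f' f hf'u hfu hf'D hfD, hf's, hfs]

/-- Uniqueness of decompositions: an element of `D e` (`e` a unit) has only the obvious
decomposition. -/
theorem decomp_unique (hds : P.directSum) {x : R} {e : G} (he : 𝔾.unit e) (hx : x ∈ P.D e)
    {f : G →₀ R} (hfu : ∀ g ∈ f.support, 𝔾.unit g) (hfD : ∀ g, f g ∈ P.D g)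
    (hfs : f.sum (fun _ v => v) = x) : f = Finsupp.single e x := by
  classical
  have h := hds.2 (f - Finsupp.single e x) ?_ ?_ ?_
  · exact sub_eq_zero.mp h
  · intro g hg
    rcases Finset.mem_union.mp (Finsupp.support_sub hg) with h1 | h1
    · exact hfu g h1
    · rw [Finset.mem_singleton.mp (Finsupp.support_single_subset h1)]; exact he
  · intro g
    rw [Finsupp.sub_apply, Finsupp.single_apply]
    split_ifs with hk
    · subst hk
      rw [sub_eq_add_neg]
      exact P.add_mem e _ (hfD e) _ (P.neg_mem e x hx)
    · rw [sub_zero]; exact hfD g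
  · rw [Finsupp.sum_sub_index (fun _ _ _ => rfl), hfs,
      Finsupp.sum_single_index rfl, sub_self]

/-- `gradedBase I` is a `G`-invariant ideal when `I` is a skew ideal. -/
theorem isInvIdeal_gradedBase (hsu : ∀ g, IsSUnitalSet (P.D g)) (hds : P.directSum)
    {I : Set (G →₀ R)} (hI : P.IsSkewIdeal I) : P.IsInvIdeal (P.gradedBase I) := by
  classical
  refine ⟨⟨⟨0, fun g hg => absurd rfl (Finsupp.mem_support_iff.mp hg),
      fun g => P.zero_mem g, fun g => by rw [Finsupp.zero_apply, Finsupp.single_zero]; exact hI.2.1,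
      Finsupp.sum_zero_index⟩, ?_, ?_, fun x hx y => P.gradedBase_mul hds hI hx y⟩, ?_⟩
  · rintro x ⟨f, hfu, hfD, hfI, hfs⟩ y ⟨f', hf'u, hf'D, hf'I, hf's⟩
    refine ⟨f + f', ?_, ?_, ?_, ?_⟩
    · intro g hg
      rcases Finset.mem_union.mp (Finsupp.support_add hg) with h | h
      · exact hfu g h
      · exact hf'u g h
    · intro g
      rw [Finsupp.add_apply]
      exact P.add_mem g _ (hfD g) _ (hf'D g)
    · intro g
      rw [Finsupp.add_apply, Finsupp.single_add]
      exact hI.2.2.1 _ (hfI g) _ (hf'I g)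
    · rw [Finsupp.sum_add_index' (fun _ => rfl) (fun _ _ _ => rfl), hfs, hf's]
  · rintro x ⟨f, hfu, hfD, hfI, hfs⟩
    refine ⟨-f, ?_, ?_, ?_, ?_⟩
    · intro g hg
      rw [Finsupp.support_neg] at hg
      exact hfu g hg
    · intro g
      rw [Finsupp.neg_apply]
      exact P.neg_mem g _ (hfD g)
    · intro g
      rw [Finsupp.neg_apply, Finsupp.single_neg]
      exact hI.2.2.2.1 _ (hfI g)
    · rw [Finsupp.sum, Finsupp.support_neg]
      simp only [Finsupp.neg_apply]
      rw [Finset.sum_neg_distrib, Finsupp.sum] at *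
      rw [hfs]
  · rintro g x ⟨hxD, f, hfu, hfD, hfI, hfs⟩
    have hxsg : x ∈ P.D (𝔾.s g) := by
      have := P.subset_r (𝔾.inv g) hxD
      rwa [𝔾.r_inv] at this
    have hf : f = Finsupp.single (𝔾.s g) x := P.decomp_unique hds (𝔾.unit_s g) hxsg hfu hfD hfs
    have hsingle : (Finsupp.single (𝔾.s g) x : G →₀ R) ∈ I := by
      have := hfI (𝔾.s g)
      rwa [hf, Finsupp.single_eq_same] at this
    obtain ⟨⟨d, hd, hxd⟩, ⟨v, hv, hvx⟩⟩ := hsu (𝔾.inv g) x hxD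
    -- (act g v δ_g)(x δ_{s g}) = act g x δ_g ∈ I
    have hB : (Finsupp.single g (P.act g x) : G →₀ R) ∈ I := by
      have p : 𝔾.s g = 𝔾.r (𝔾.s g) := (𝔾.r_of_s g).symm
      have hcalc := P.skewMul_single g (𝔾.s g) (P.act g v) x
      rw [dif_pos p, 𝔾.mul_id g p, P.act_inv g v hv, hvx] at hcalc
      rw [← hcalc]
      exact (hI.2.2.2.2 _ hsingle _ (P.single_mem_carrier (P.act_mem g v hv))).2
    -- (act g x δ_g)(d δ_{g⁻¹}) = act g x δ_{r g} ∈ I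
    have hC : (Finsupp.single (𝔾.r g) (P.act g x) : G →₀ R) ∈ I := by
      have p : 𝔾.s g = 𝔾.r (𝔾.inv g) := (𝔾.r_inv g).symm
      have hcalc := P.skewMul_single g (𝔾.inv g) (P.act g x) d
      rw [dif_pos p, 𝔾.mul_inv g p, P.act_inv g x hxD, hxd] at hcalc
      rw [← hcalc]
      exact (hI.2.2.2.2 _ hB _ (P.single_mem_carrier hd)).1
    refine ⟨Finsupp.single (𝔾.r g) (P.act g x), ?_, ?_, ?_, ?_⟩
    · intro k hk
      rw [Finset.mem_singleton.mp (Finsupp.support_single_subset hk)]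
      exact 𝔾.unit_r g
    · intro k
      rw [Finsupp.single_apply]
      split_ifs with hk
      · exact hk ▸ P.subset_r g (P.act_mem g x hxD)
      · exact P.zero_mem k
    · intro k
      rw [Finsupp.single_apply]
      split_ifs with hk
      · subst hk
        exact hC
      · rw [Finsupp.single_zero]; exact hI.2.1
    · exact Finsupp.sum_single_index rfl

/-- If all skew products `I · J` vanish, so do the products of the graded bases. -/
theorem gradedBase_mul_zero (hds : P.directSum) {I J : Set (G →₀ R)}
    (hIJ : ∀ x ∈ I, ∀ y ∈ J, P.skewMul x y = 0) {x y : R}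
    (hx : x ∈ P.gradedBase I) (hy : y ∈ P.gradedBase J) : x * y = 0 := by
  classical
  obtain ⟨f, hfu, hfD, hfI, hfs⟩ := hx
  obtain ⟨f', hf'u, hf'D, hf'J, hf's⟩ := hy
  rw [← hfs, ← hf's, P.mul_decomp hds f f' hfu hf'u hfD hf'D]
  refine Finset.sum_eq_zero fun g hg => ?_
  by_cases h0 : f' g = 0
  · rw [h0, mul_zero]
  · have hg' : g ∈ f'.support := Finsupp.mem_support_iff.mpr h0
    have := hIJ _ (hfI g) _ (hf'J g)
    rw [P.skewMul_single_unit (hfu g hg) (hfD g) (hf'D g)] at this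
    exact Finsupp.single_eq_zero.mp this

/-- If the graded base of a graded ideal `I` is trivial, so is `I`. -/
theorem eq_zero_of_gradedBase_eq_zero (hsu : ∀ g, IsSUnitalSet (P.D g))
    {I : Set (G →₀ R)} (hI : P.IsGradedIdeal I) (h : P.gradedBase I = {0}) :
    I = {0} := by
  classical
  ext a
  simp only [Set.mem_singleton_iff]
  constructor
  · intro ha
    have hkey : ∀ g, a g = 0 := by
      intro g
      have haD : a g ∈ P.D g := hI.1.1 ha g
      obtain ⟨-, v, hv, hva⟩ := hsu g (a g) haD
      have hsingle : (Finsupp.single g (a g) : G →₀ R) ∈ I := hI.2 a ha g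
      have hD : (Finsupp.single (𝔾.s g) (P.act (𝔾.inv g) (a g)) : G →₀ R) ∈ I := by
        have p : 𝔾.s (𝔾.inv g) = 𝔾.r g := 𝔾.s_inv g
        have hvinv : v ∈ P.D (𝔾.inv (𝔾.inv g)) := by rw [𝔾.inv_inv]; exact hv
        have hcalc := P.skewMul_single (𝔾.inv g) g (P.act (𝔾.inv g) v) (a g)
        rw [dif_pos p, 𝔾.inv_mul g p, P.act_inv (𝔾.inv g) v hvinv, hva] at hcalc
        rw [← hcalc]
        exact (hI.1.2.2.2.2 _ hsingle _
          (P.single_mem_carrier (P.act_mem (𝔾.inv g) v hvinv))).2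
      have hmem : P.act (𝔾.inv g) (a g) ∈ P.gradedBase I := by
        refine ⟨Finsupp.single (𝔾.s g) (P.act (𝔾.inv g) (a g)), ?_, ?_, ?_, ?_⟩
        · intro k hk
          rw [Finset.mem_singleton.mp (Finsupp.support_single_subset hk)]
          exact 𝔾.unit_s g
        · intro k
          rw [Finsupp.single_apply]
          split_ifs with hk
          · refine hk ▸ ?_
            have := P.subset_r (𝔾.inv g) (P.act_mem (𝔾.inv g) (a g)
              (by rw [𝔾.inv_inv]; exact haD))
            rwa [𝔾.r_inv] at this
          · exact P.zero_mem k
        · intro k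
          rw [Finsupp.single_apply]
          split_ifs with hk
          · subst hk
            exact hD
          · rw [Finsupp.single_zero]; exact hI.1.2.1
        · exact Finsupp.sum_single_index rfl
      rw [h, Set.mem_singleton_iff] at hmem
      have := P.act_act_inv haD
      rw [hmem, P.act_zero] at this
      exact this.symm
    ext g
    exact hkey g
  · rintro rfl
    exact hI.1.2.1

end PartialAction

end AuxiliaryLemmas

/-- **Statement 12.** `R` is `G`-prime if, and only if, `R ⋊_α G` is graded prime. -/
theorem gPrime_iff_gradedPrime {G R : Type*} [NonUnitalRing R]
    (𝔾 : DGroupoid G) (P : PartialAction 𝔾 R)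
    (hsu : ∀ g, IsSUnitalSet (P.D g)) (hds : P.directSum) :
    P.GPrime ↔ P.GradedPrime := by
  constructor
  · intro hGP I J hI hJ hIJ
    rcases hGP _ _ (P.isInvIdeal_gradedBase hsu hds hI.1) (P.isInvIdeal_gradedBase hsu hds hJ.1)
      (fun x hx y hy => P.gradedBase_mul_zero hds hIJ hx hy) with h | h
    · exact Or.inl (P.eq_zero_of_gradedBase_eq_zero hsu hI h)
    · exact Or.inr (P.eq_zero_of_gradedBase_eq_zero hsu hJ h)
  · intro hGP I J hI hJ hIJ
    rcases hGP _ _ (P.isGradedIdeal_skewOf hI) (P.isGradedIdeal_skewOf hJ)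
      (fun x hx y hy => P.skewMul_skewOf_zero hI hIJ hx hy) with h | h
    · exact Or.inl (P.eq_zero_of_skewOf_eq_zero hsu hds hI.1 h)
    · exact Or.inr (P.eq_zero_of_skewOf_eq_zero hsu hds hJ.1 h)
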